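/- Every admissible Poisson algebra is power associative: for any element X, defining X^1 = X and X^{i+1} = X·X^i, one has X^i · X^j = X^{i+j} for all i, j ≥ 1. -/
import Mathlib


variable {K : Type*} [Field K] {P : Type*} [AddCommGroup P] [Module K P]

/-- The associator of a bilinear multiplication. -/
def assocOf (m : P →ₗ[K] P →ₗ[K] P) (X Y Z : P) : P := m (m X Y) Z - m X (m Y Z)

/-- Admissible Poisson algebra condition:
`3 A(X,Y,Z) = (X·Z)·Y + (Y·Z)·X - (Y·X)·Z - (Z·X)·Y`. -/
def IsAdmissible (m : P →ₗ[K] P →ₗ[K] P) : Prop :=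
  ∀ X Y Z : P, (3 : ℤ) • assocOf m X Y Z =
    m (m X Z) Y + m (m Y Z) X - m (m Y X) Z - m (m Z X) Y

/-- The antisymmetrized bracket `{X,Y} = (X·Y - Y·X)/2`. -/
def brOf (m : P →ₗ[K] P →ₗ[K] P) (X Y : P) : P := (2 : K)⁻¹ • (m X Y - m Y X)

/-- The symmetrized product `X∙Y = (X·Y + Y·X)/2`. -/
def bulOf (m : P →ₗ[K] P →ₗ[K] P) (X Y : P) : P := (2 : K)⁻¹ • (m X Y + m Y X)

/-- Powers: `pw m X n = X^(n+1)`, i.e. `X^1 = X`, `X^(i+1) = X · X^i`. -/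
def pw (m : P →ₗ[K] P →ₗ[K] P) (X : P) : ℕ → P
  | 0 => X
  | n + 1 => m X (pw m X n)

/-- Scaled symmetrized product `X·Y + Y·X` (twice `bulOf`). -/
private def Bop (m : P →ₗ[K] P →ₗ[K] P) (a b : P) : P := m a b + m b a

/-- Scaled antisymmetrized bracket `X·Y - Y·X` (twice `brOf`). -/
private def Rop (m : P →ₗ[K] P →ₗ[K] P) (a b : P) : P := m a b - m b a

private lemma three_cancel (h3 : (3 : K) ≠ 0) {a b : P} (h : (3 : ℤ) • a = (3 : ℤ) • b) :
    a = b := by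
  have h' : (3 : K) • a = (3 : K) • b := by
    have ha : ((3 : ℤ) : K) • a = (3 : ℤ) • a := Int.cast_smul_eq_zsmul K 3 a
    have hb : ((3 : ℤ) : K) • b = (3 : ℤ) • b := Int.cast_smul_eq_zsmul K 3 b
    push_cast at ha hb
    rw [ha, hb]; exact h
  exact smul_right_injective P h3 h'

private lemma two_cancel (h2 : (2 : K) ≠ 0) {a b : P} (h : (2 : K) • a = (2 : K) • b) :
    a = b := smul_right_injective P h2 h

private lemma Rop_anti (m : P →ₗ[K] P →ₗ[K] P) (a b : P) : Rop m a b = -Rop m b a := by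
  simp only [Rop]; abel

private lemma Rop_self (m : P →ₗ[K] P →ₗ[K] P) (a : P) : Rop m a a = 0 := by
  simp [Rop]

private lemma Bop_smul_left (m : P →ₗ[K] P →ₗ[K] P) (t : K) (a b : P) :
    Bop m (t • a) b = t • Bop m a b := by
  simp only [Bop, map_smul, LinearMap.smul_apply, smul_add]

private lemma Bop_smul_right (m : P →ₗ[K] P →ₗ[K] P) (t : K) (a b : P) :
    Bop m a (t • b) = t • Bop m a b := by
  simp only [Bop, map_smul, LinearMap.smul_apply, smul_add]

private lemma Rop_smul_left (m : P →ₗ[K] P →ₗ[K] P) (t : K) (a b : P) :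
    Rop m (t • a) b = t • Rop m a b := by
  simp only [Rop, map_smul, LinearMap.smul_apply, smul_sub]

private lemma Rop_smul_right (m : P →ₗ[K] P →ₗ[K] P) (t : K) (a b : P) :
    Rop m a (t • b) = t • Rop m a b := by
  simp only [Rop, map_smul, LinearMap.smul_apply, smul_sub]

private lemma Bop_zero_right (m : P →ₗ[K] P →ₗ[K] P) (a : P) : Bop m a 0 = 0 := by
  simp [Bop]

/-- Key identity 1: the scaled symmetrized product is associative. -/
private lemma Bop_assoc {m : P →ₗ[K] P →ₗ[K] P} (h3 : (3 : K) ≠ 0) (hm : IsAdmissible m)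
    (X Y Z : P) : Bop m (Bop m X Y) Z = Bop m X (Bop m Y Z) := by
  have h1 := hm X Y Z
  have h2' := hm X Z Y
  have h5 := hm Z X Y
  have h6 := hm Z Y X
  simp only [assocOf] at h1 h2' h5 h6
  apply three_cancel h3
  simp only [Bop, map_add, LinearMap.add_apply]
  linear_combination (norm := module) h1 + h2' - h5 - h6

/-- Key identity 2: Leibniz rule for the scaled bracket over the scaled product. -/
private lemma Rop_leibniz {m : P →ₗ[K] P →ₗ[K] P} (h3 : (3 : K) ≠ 0) (hm : IsAdmissible m)
    (X Y Z : P) : Rop m X (Bop m Y Z) = Bop m (Rop m X Y) Z + Bop m Y (Rop m X Z) := by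
  have h1 := hm X Y Z
  have h2' := hm X Z Y
  have h3' := hm Y X Z
  have h4 := hm Y Z X
  have h5 := hm Z X Y
  have h6 := hm Z Y X
  simp only [assocOf] at h1 h2' h3' h4 h5 h6
  apply three_cancel (K := K) h3
  simp only [Bop, Rop, map_add, map_sub, LinearMap.add_apply, LinearMap.sub_apply]
  linear_combination (norm := module) -h1 - h2' + h3' - h4 + h5 - h6

/-- every admissible Poisson algebra is power associative:
`X^i · X^j = X^(i+j)` for all `i, j ≥ 1` (here `pw m X n` denotes `X^(n+1)`). -/
theorem stmt5 (h2 : (2 : K) ≠ 0) (h3 : (3 : K) ≠ 0)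
    (m : P →ₗ[K] P →ₗ[K] P) (hm : IsAdmissible m) :
    ∀ (X : P) (i j : ℕ), m (pw m X i) (pw m X j) = pw m X (i + j + 1) := by
  intro X
  -- Claim 1 : {X, X^n} = 0
  have claim1 : ∀ n : ℕ, Rop m X (pw m X n) = 0 := by
    intro n
    induction n with
    | zero => exact Rop_self m X
    | succ n ih =>
      have hsym : m X (pw m X n) = m (pw m X n) X := by
        have := ih; rw [Rop, sub_eq_zero] at this; exact this
      have hp : (2 : K) • pw m X (n + 1) = Bop m X (pw m X n) := by
        show (2 : K) • m X (pw m X n) = _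
        rw [two_smul, Bop, hsym]
      apply two_cancel h2
      rw [← Rop_smul_right, hp, Rop_leibniz h3 hm, Rop_self, ih, Bop_zero_right, smul_zero]
      simp [Bop]
  have hsym : ∀ n : ℕ, m X (pw m X n) = m (pw m X n) X := by
    intro n
    have := claim1 n; rw [Rop, sub_eq_zero] at this; exact this
  have hstep : ∀ n : ℕ, Bop m X (pw m X n) = (2 : K) • pw m X (n + 1) := by
    intro n
    show _ = (2 : K) • m X (pw m X n)
    rw [two_smul, Bop, hsym]
  -- Claim 2 : {X^i, X^j} = 0
  have claim2 : ∀ i j : ℕ, Rop m (pw m X i) (pw m X j) = 0 := by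
    intro i
    induction i with
    | zero => exact claim1
    | succ i ih =>
      intro j
      apply two_cancel h2
      rw [smul_zero, ← Rop_smul_left, ← hstep, Rop_anti, Rop_leibniz h3 hm]
      have e1 : Rop m (pw m X j) X = 0 := by rw [Rop_anti, claim1 j, neg_zero]
      have e2 : Rop m (pw m X j) (pw m X i) = 0 := by rw [Rop_anti, ih j, neg_zero]
      rw [e1, e2, Bop_zero_right]
      simp [Bop]
  -- Claim 3 : X^i ∙ X^j (scaled) = 2 • X^(i+j+1)
  have claim3 : ∀ i j : ℕ, Bop m (pw m X i) (pw m X j) = (2 : K) • pw m X (i + j + 1) := by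
    intro i
    induction i with
    | zero =>
      intro j
      have := hstep j
      rw [show (0 : ℕ) + j + 1 = j + 1 from by omega]
      exact this
    | succ i ih =>
      intro j
      apply two_cancel h2
      rw [← Bop_smul_left, ← hstep, Bop_assoc h3 hm, ih j, Bop_smul_right, hstep,
        show i + j + 1 + 1 = i + 1 + j + 1 from by omega]
  intro i j
  apply two_cancel h2
  have expand : (2 : K) • m (pw m X i) (pw m X j)
      = Bop m (pw m X i) (pw m X j) + Rop m (pw m X i) (pw m X j) := by
    rw [two_smul, Bop, Rop]; abel
  rw [expand, claim2, claim3, add_zero]
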